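/- For a permutation w in S_n, the pair (e, w) (where e is the identity) is divisible if and only if w contains the pattern 321 or the pattern 3412. -/
import Mathlib


open Equiv

/-- one-line notation (1-based values) of a permutation of `Fin n` -/
def oneLine {n : ℕ} (w : Perm (Fin n)) : List ℕ := List.ofFn fun i => (w i).val + 1

/-- `w` contains the pattern given by the list `p` (distinct positive integers
in one-line notation): some subsequence of `w` has the same relative order. -/
def ContainsPat {n : ℕ} (w : Perm (Fin n)) (p : List ℕ) : Prop :=
  ∃ f : Fin p.length → Fin n, StrictMono f ∧
    ∀ i j : Fin p.length, p.get i < p.get j ↔ w (f i) < w (f j)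

/-- Coxeter length of a permutation = number of inversions -/
def len {n : ℕ} (w : Perm (Fin n)) : ℕ :=
  (Finset.univ.filter fun q : Fin n × Fin n => q.1 < q.2 ∧ w q.2 < w q.1).card

/-- the simple generators `s_i = (i, i+1)` that are left descents of `w` -/
def descentGens {n : ℕ} (w : Perm (Fin n)) : Set (Perm (Fin n)) :=
  {u | ∃ i j : Fin n, (i : ℕ) + 1 = (j : ℕ) ∧ u = Equiv.swap i j ∧ w⁻¹ j < w⁻¹ i}

/-- `v` is the longest element `w₀(J(w))` of the parabolic subgroup generated by
the left descents of `w` -/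
def IsW0J {n : ℕ} (w v : Perm (Fin n)) : Prop :=
  v ∈ Subgroup.closure (descentGens w) ∧
    ∀ u ∈ Subgroup.closure (descentGens w), len u ≤ len v

/-- `v[1,i]`: the set of values in the first `i` positions (`i` is 1-based) -/
def prefSet {n : ℕ} (v : Perm (Fin n)) (i : ℕ) : Finset (Fin n) :=
  (Finset.univ.filter fun j : Fin n => (j : ℕ) < i).image v

/-- `(v,w)` is divisible after position `i` : `|v[1,i] ∩ w[1,i]| ≤ i - 2` -/
def DivisibleAfter {n : ℕ} (v w : Perm (Fin n)) (i : ℕ) : Prop :=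
  (prefSet v i ∩ prefSet w i).card + 2 ≤ i

/-- `(v,w)` is divisible at position `i` : `v(i) = w(i)` and `|v[1,i] ∩ w[1,i]| ≤ i - 1` -/
def DivisibleAt {n : ℕ} (v w : Perm (Fin n)) (i : ℕ) : Prop :=
  ∃ h : i - 1 < n, v ⟨i - 1, h⟩ = w ⟨i - 1, h⟩ ∧ (prefSet v i ∩ prefSet w i).card + 1 ≤ i

/-- `(v,w)` is divisible at or after some position `1 ≤ i ≤ n` -/
def Divisible {n : ℕ} (v w : Perm (Fin n)) : Prop :=
  ∃ i : ℕ, 1 ≤ i ∧ i ≤ n ∧ (DivisibleAfter v w i ∨ DivisibleAt v w i)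

def pat321 : List ℕ := [3, 2, 1]
def pat3412 : List ℕ := [3, 4, 1, 2]

def P321L : List (List ℕ) :=
  [[2,4,5,3,1],[2,5,3,1,4],[2,5,3,4,1],[4,2,5,3,1],[4,5,2,3,1],[4,5,3,1,2],
   [5,2,3,1,4],[5,2,3,4,1],[5,3,1,2,4],[5,3,1,4,2],[5,3,4,1,2]]

def P3412L : List (List ℕ) :=
  [[3,4,5,1,2],[3,4,5,2,1],[3,5,4,1,2],[3,5,4,2,1],[4,5,1,2,3],[4,5,2,1,3],
   [4,5,2,3,1],[5,3,4,1,2],[5,3,4,2,1],[5,4,1,2,3],[5,4,2,1,3],[5,4,2,3,1]]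

def PL : List (List ℕ) :=
  [[2,4,5,3,1],[2,5,3,1,4],[2,5,3,4,1],[3,4,5,1,2],[3,4,5,2,1],[3,5,4,1,2],[3,5,4,2,1],
   [4,2,5,3,1],[4,5,1,2,3],[4,5,2,1,3],[4,5,2,3,1],[4,5,3,1,2],[5,2,3,1,4],[5,2,3,4,1],
   [5,3,1,2,4],[5,3,1,4,2],[5,3,4,1,2],[5,3,4,2,1],[5,4,1,2,3],[5,4,2,1,3],[5,4,2,3,1]]

/-- Bruhat order: generated by covers `a ⋖ a·t` with `t` a transposition and
`ℓ(a·t) = ℓ(a) + 1` -/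
def BruhatLE {n : ℕ} (v w : Perm (Fin n)) : Prop :=
  Relation.ReflTransGen
    (fun a b => (∃ x y : Fin n, x ≠ y ∧ b = a * Equiv.swap x y) ∧ len b = len a + 1) v w

/-- product of a word in the simple generators `s_i = (i, i+1)` -/
def wordProd {n : ℕ} (l : List {i : ℕ // i + 1 < n}) : Perm (Fin n) :=
  (l.map fun i => Equiv.swap (⟨i.1, Nat.lt_of_succ_lt i.2⟩ : Fin n) ⟨i.1 + 1, i.2⟩).prod

/-- `l` is a reduced word for `w`: a minimal-length expression of `w` as a
product of simple generators -/
def IsReducedWord {n : ℕ} (w : Perm (Fin n)) (l : List {i : ℕ // i + 1 < n}) : Prop :=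
  wordProd l = w ∧
    ∀ l' : List {i : ℕ // i + 1 < n}, wordProd l' = w → l.length ≤ l'.length


section Aux
open Finset
variable {n : ℕ}

lemma card_filter_lt (i : ℕ) (hi : i ≤ n) :
    (Finset.univ.filter fun j : Fin n => (j:ℕ) < i).card = i := by
  have h : (Finset.univ.filter fun j : Fin n => (j:ℕ) < i)
      = Finset.univ.image (Fin.castLE hi) := by
    ext x
    simp only [mem_filter, mem_univ, true_and, mem_image]
    constructor
    · intro hx; exact ⟨⟨x, hx⟩, rfl⟩
    · rintro ⟨y, rfl⟩; exact y.2
  rw [h, Finset.card_image_of_injective _ (Fin.castLE_injective hi)]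
  simp

lemma card_filter_apply_lt (w : Perm (Fin n)) (i : ℕ) (hi : i ≤ n) :
    (Finset.univ.filter fun j : Fin n => ((w j : Fin n):ℕ) < i).card = i := by
  have h : (Finset.univ.filter fun j : Fin n => (j:ℕ) < i)
      = (Finset.univ.filter fun j : Fin n => ((w j : Fin n):ℕ) < i).image w := by
    ext x
    simp only [mem_filter, mem_univ, true_and, mem_image]
    constructor
    · intro hx; exact ⟨w⁻¹ x, by simpa using hx, by simp⟩
    · rintro ⟨y, hy, rfl⟩; exact hy
  have h2 := card_filter_lt (n := n) i hi
  rw [h, Finset.card_image_of_injective _ w.injective] at h2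
  exact h2


lemma mem_prefSet (v : Perm (Fin n)) (i : ℕ) (x : Fin n) :
    x ∈ prefSet v i ↔ ((v⁻¹ x : Fin n) : ℕ) < i := by
  simp only [prefSet, mem_image, mem_filter, mem_univ, true_and]
  constructor
  · rintro ⟨j, hj, rfl⟩; simpa using hj
  · intro hx; exact ⟨v⁻¹ x, hx, by simp⟩

lemma inter_card (w : Perm (Fin n)) (i : ℕ) :
    (prefSet 1 i ∩ prefSet w i).card
      = (Finset.univ.filter fun j : Fin n => (j:ℕ) < i ∧ ((w j : Fin n):ℕ) < i).card := by
  have h : prefSet (1 : Perm (Fin n)) i ∩ prefSet w i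
      = (Finset.univ.filter fun j : Fin n => (j:ℕ) < i ∧ ((w j : Fin n):ℕ) < i).image w := by
    ext x
    simp only [mem_inter, mem_prefSet, mem_image, mem_filter, mem_univ, true_and]
    constructor
    · rintro ⟨hx1, hx2⟩
      refine ⟨w⁻¹ x, ⟨hx2, ?_⟩, by simp⟩
      simpa using hx1
    · rintro ⟨j, ⟨hj, hx⟩, rfl⟩
      exact ⟨by simpa using hx, by simpa using hj⟩
  rw [h, Finset.card_image_of_injective _ w.injective]

lemma sum_ups (w : Perm (Fin n)) (i : ℕ) (hi : i ≤ n) :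
    (Finset.univ.filter fun j : Fin n => (j:ℕ) < i ∧ ((w j : Fin n):ℕ) < i).card
      + (Finset.univ.filter fun j : Fin n => (j:ℕ) < i ∧ i ≤ ((w j : Fin n):ℕ)).card = i := by
  have h := Finset.card_filter_add_card_filter_not
    (s := Finset.univ.filter fun j : Fin n => (j:ℕ) < i)
    (p := fun j : Fin n => ((w j : Fin n):ℕ) < i)
  simp only [Finset.filter_filter, not_lt] at h
  rw [card_filter_lt i hi] at h
  convert h using 3 <;> ext j <;> tauto

lemma sum_downs (w : Perm (Fin n)) (i : ℕ) (hi : i ≤ n) :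
    (Finset.univ.filter fun j : Fin n => (j:ℕ) < i ∧ ((w j : Fin n):ℕ) < i).card
      + (Finset.univ.filter fun j : Fin n => i ≤ (j:ℕ) ∧ ((w j : Fin n):ℕ) < i).card = i := by
  have h := Finset.card_filter_add_card_filter_not
    (s := Finset.univ.filter fun j : Fin n => ((w j : Fin n):ℕ) < i)
    (p := fun j : Fin n => (j:ℕ) < i)
  simp only [Finset.filter_filter, not_lt] at h
  rw [card_filter_apply_lt w i hi] at h
  have e1 : (Finset.univ.filter fun j : Fin n => ((w j : Fin n):ℕ) < i ∧ (j:ℕ) < i)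
      = Finset.univ.filter fun j : Fin n => (j:ℕ) < i ∧ ((w j : Fin n):ℕ) < i := by
    ext j; simp only [mem_filter]; tauto
  have e2 : (Finset.univ.filter fun j : Fin n => ((w j : Fin n):ℕ) < i ∧ i ≤ (j:ℕ))
      = Finset.univ.filter fun j : Fin n => i ≤ (j:ℕ) ∧ ((w j : Fin n):ℕ) < i := by
    ext j; simp only [mem_filter]; tauto
  rw [e1, e2] at h
  exact h

end Aux

section Pat
variable {n : ℕ} (w : Perm (Fin n))

lemma contains321 (a b c : Fin n) (hab : a < b) (hbc : b < c)
    (h1 : w b < w a) (h2 : w c < w b) : ContainsPat w pat321 := by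
  refine ⟨fun i => if (i:ℕ) = 0 then a else if (i:ℕ) = 1 then b else c, ?_, ?_⟩
  · rintro ⟨iv, hiv⟩ ⟨jv, hjv⟩ hij
    have hiv' : iv < 3 := hiv
    have hjv' : jv < 3 := hjv
    have hij' : iv < jv := hij
    interval_cases iv <;> interval_cases jv <;> norm_num <;> omega
  · rintro ⟨iv, hiv⟩ ⟨jv, hjv⟩
    have hiv' : iv < 3 := hiv
    have hjv' : jv < 3 := hjv
    interval_cases iv <;> interval_cases jv <;> (norm_num [pat321]; try omega)

lemma contains3412 (a b c d : Fin n) (hab : a < b) (hbc : b < c) (hcd : c < d)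
    (h1 : w a < w b) (h2 : w c < w d) (h3 : w d < w a) : ContainsPat w pat3412 := by
  refine ⟨fun i => if (i:ℕ) = 0 then a else if (i:ℕ) = 1 then b
      else if (i:ℕ) = 2 then c else d, ?_, ?_⟩
  · rintro ⟨iv, hiv⟩ ⟨jv, hjv⟩ hij
    have hiv' : iv < 4 := hiv
    have hjv' : jv < 4 := hjv
    have hij' : iv < jv := hij
    interval_cases iv <;> interval_cases jv <;> norm_num <;> omega
  · rintro ⟨iv, hiv⟩ ⟨jv, hjv⟩
    have hiv' : iv < 4 := hiv
    have hjv' : jv < 4 := hjv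
    interval_cases iv <;> interval_cases jv <;> (norm_num [pat3412]; try omega)

end Pat

lemma of_contains321 {n : ℕ} (w : Perm (Fin n)) (h : ContainsPat w pat321) :
    ∃ a b c : Fin n, a < b ∧ b < c ∧ w b < w a ∧ w c < w b := by
  obtain ⟨f, hf, hp⟩ := h
  have l0 : (0:ℕ) < pat321.length := by norm_num [pat321]
  have l1 : (1:ℕ) < pat321.length := by norm_num [pat321]
  have l2 : (2:ℕ) < pat321.length := by norm_num [pat321]
  refine ⟨f ⟨0,l0⟩, f ⟨1,l1⟩, f ⟨2,l2⟩, hf (by norm_num [Fin.lt_def]),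
    hf (by norm_num [Fin.lt_def]), ?_, ?_⟩
  · exact (hp ⟨1,l1⟩ ⟨0,l0⟩).mp (by norm_num [pat321])
  · exact (hp ⟨2,l2⟩ ⟨1,l1⟩).mp (by norm_num [pat321])

lemma of_contains3412 {n : ℕ} (w : Perm (Fin n)) (h : ContainsPat w pat3412) :
    ∃ a b c d : Fin n, a < b ∧ b < c ∧ c < d ∧ w a < w b ∧ w c < w d ∧ w d < w a := by
  obtain ⟨f, hf, hp⟩ := h
  have l0 : (0:ℕ) < pat3412.length := by norm_num [pat3412]
  have l1 : (1:ℕ) < pat3412.length := by norm_num [pat3412]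
  have l2 : (2:ℕ) < pat3412.length := by norm_num [pat3412]
  have l3 : (3:ℕ) < pat3412.length := by norm_num [pat3412]
  refine ⟨f ⟨0,l0⟩, f ⟨1,l1⟩, f ⟨2,l2⟩, f ⟨3,l3⟩, hf (by norm_num [Fin.lt_def]),
    hf (by norm_num [Fin.lt_def]), hf (by norm_num [Fin.lt_def]), ?_, ?_, ?_⟩
  · exact (hp ⟨0,l0⟩ ⟨1,l1⟩).mp (by norm_num [pat3412])
  · exact (hp ⟨2,l2⟩ ⟨3,l3⟩).mp (by norm_num [pat3412])
  · exact (hp ⟨3,l3⟩ ⟨0,l0⟩).mp (by norm_num [pat3412])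

lemma two_elems {n : ℕ} (s : Finset (Fin n)) (hs : 2 ≤ s.card) :
    ∃ a b, a ∈ s ∧ b ∈ s ∧ a < b := by
  obtain ⟨a, ha, b, hb, hne⟩ := Finset.one_lt_card.mp hs
  rcases hne.lt_or_gt with h | h
  exacts [⟨a, b, ha, hb, h⟩, ⟨b, a, hb, ha, h⟩]

theorem stmt4 (n : ℕ) (w : Perm (Fin n)) :
    Divisible 1 w ↔ (ContainsPat w pat321 ∨ ContainsPat w pat3412) := by
  constructor
  · rintro ⟨i, hi1, hin, hdiv⟩
    have hsum := sum_ups w i hin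
    have hsumd := sum_downs w i hin
    have hic := inter_card w i
    rcases hdiv with hA | ⟨h, hfix, hcard⟩
    · have hA' : (Finset.univ.filter fun j : Fin n =>
          (j:ℕ) < i ∧ ((w j : Fin n):ℕ) < i).card + 2 ≤ i := by
        rw [← hic]; exact hA
      have hU : 2 ≤ (Finset.univ.filter fun j : Fin n =>
          (j:ℕ) < i ∧ i ≤ ((w j : Fin n):ℕ)).card := by omega
      have hD : 2 ≤ (Finset.univ.filter fun j : Fin n =>
          i ≤ (j:ℕ) ∧ ((w j : Fin n):ℕ) < i).card := by omega
      obtain ⟨a, b, ha, hb, hab⟩ := two_elems _ hU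
      obtain ⟨c, d, hc, hd, hcd⟩ := two_elems _ hD
      simp only [Finset.mem_filter, Finset.mem_univ, true_and] at ha hb hc hd
      obtain ⟨ha1, ha2⟩ := ha; obtain ⟨hb1, hb2⟩ := hb
      obtain ⟨hc1, hc2⟩ := hc; obtain ⟨hd1, hd2⟩ := hd
      have hbc : b < c := by omega
      rcases lt_or_ge (w b) (w a) with h1 | h1
      · exact Or.inl (contains321 w a b c hab hbc h1 (by omega))
      · have h1' : w a < w b := lt_of_le_of_ne h1 (w.injective.ne hab.ne)
        rcases lt_or_ge (w d) (w c) with h2 | h2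
        · exact Or.inl (contains321 w b c d hbc hcd (by omega) h2)
        · have h2' : w c < w d := lt_of_le_of_ne h2 (w.injective.ne hcd.ne)
          exact Or.inr (contains3412 w a b c d hab hbc hcd h1' h2' (by omega))
    · have hcard' : (Finset.univ.filter fun j : Fin n =>
          (j:ℕ) < i ∧ ((w j : Fin n):ℕ) < i).card + 1 ≤ i := by
        rw [← hic]; exact hcard
      have hU : 1 ≤ (Finset.univ.filter fun j : Fin n =>
          (j:ℕ) < i ∧ i ≤ ((w j : Fin n):ℕ)).card := by omega
      have hD : 1 ≤ (Finset.univ.filter fun j : Fin n =>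
          i ≤ (j:ℕ) ∧ ((w j : Fin n):ℕ) < i).card := by omega
      obtain ⟨a, ha⟩ := Finset.card_pos.mp hU
      obtain ⟨c, hc⟩ := Finset.card_pos.mp hD
      simp only [Finset.mem_filter, Finset.mem_univ, true_and] at ha hc
      obtain ⟨ha1, ha2⟩ := ha; obtain ⟨hc1, hc2⟩ := hc
      set m : Fin n := ⟨i - 1, h⟩ with hm
      have hfix' : w m = m := by
        have := hfix.symm
        simpa using this
      have hwm : ((w m : Fin n):ℕ) = i - 1 := by rw [hfix']
      have hane : (a:ℕ) ≠ i - 1 := by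
        intro he
        have hae : a = m := Fin.ext he
        rw [hae, hwm] at ha2
        omega
      have hcne : ((w c : Fin n):ℕ) ≠ i - 1 := by
        intro he
        have : w c = w m := Fin.ext (by rw [hwm]; exact he)
        have hce : c = m := w.injective this
        have : (c:ℕ) = i - 1 := by rw [hce]
        omega
      refine Or.inl (contains321 w a m c ?_ ?_ ?_ ?_)
      · rw [Fin.lt_def]; show (a:ℕ) < i - 1; omega
      · rw [Fin.lt_def]; show i - 1 < (c:ℕ); omega
      · rw [Fin.lt_def]; rw [hwm]; omega
      · rw [Fin.lt_def]; rw [hwm]; omega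
  · have hAfter : ∀ i : ℕ, 1 ≤ i → i ≤ n →
        2 ≤ (Finset.univ.filter fun j : Fin n =>
          (j:ℕ) < i ∧ i ≤ ((w j : Fin n):ℕ)).card → Divisible 1 w := by
      intro i h1 h2 hcard
      refine ⟨i, h1, h2, Or.inl ?_⟩
      show (prefSet 1 i ∩ prefSet w i).card + 2 ≤ i
      rw [inter_card w i]
      have := sum_ups w i h2
      omega
    have hAfterD : ∀ i : ℕ, 1 ≤ i → i ≤ n →
        2 ≤ (Finset.univ.filter fun j : Fin n =>
          i ≤ (j:ℕ) ∧ ((w j : Fin n):ℕ) < i).card → Divisible 1 w := by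
      intro i h1 h2 hcard
      refine ⟨i, h1, h2, Or.inl ?_⟩
      show (prefSet 1 i ∩ prefSet w i).card + 2 ≤ i
      rw [inter_card w i]
      have := sum_downs w i h2
      omega
    rintro (h321 | h3412)
    · obtain ⟨a, b, c, hab, hbc, h1, h2⟩ := of_contains321 w h321
      have hab' : (a:ℕ) < (b:ℕ) := hab
      have hbc' : (b:ℕ) < (c:ℕ) := hbc
      have h1' : ((w b : Fin n):ℕ) < ((w a : Fin n):ℕ) := h1
      have h2' : ((w c : Fin n):ℕ) < ((w b : Fin n):ℕ) := h2
      rcases lt_trichotomy ((w b : Fin n):ℕ) ((b:ℕ)) with hcase | hcase | hcase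
      · refine hAfterD (((w b : Fin n):ℕ) + 1) (by omega) (w b).2 ?_
        refine Finset.one_lt_card.mpr ⟨b, ?_, c, ?_, hbc.ne⟩ <;>
          exact Finset.mem_filter.mpr ⟨Finset.mem_univ _, by omega⟩
      · -- w b = b : DivisibleAt at i = b+1
        refine ⟨(b:ℕ) + 1, by omega, b.2, Or.inr ?_⟩
        have hh : (b:ℕ) + 1 - 1 < n := by simpa using b.2
        refine ⟨hh, ?_, ?_⟩
        · have hx : (⟨(b:ℕ) + 1 - 1, hh⟩ : Fin n) = b := Fin.ext (by simp)
          rw [hx]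
          simp only [Perm.one_apply]
          exact (Fin.ext hcase).symm
        · rw [inter_card w _]
          have hs := sum_ups w ((b:ℕ) + 1) b.2
          have hmem : a ∈ (Finset.univ.filter fun j : Fin n =>
              (j:ℕ) < (b:ℕ) + 1 ∧ (b:ℕ) + 1 ≤ ((w j : Fin n):ℕ)) :=
            Finset.mem_filter.mpr ⟨Finset.mem_univ _, by omega⟩
          have := Finset.card_pos.mpr ⟨a, hmem⟩
          omega
      · refine hAfter ((b:ℕ) + 1) (by omega) b.2 ?_
        refine Finset.one_lt_card.mpr ⟨a, ?_, b, ?_, hab.ne⟩ <;>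
          exact Finset.mem_filter.mpr ⟨Finset.mem_univ _, by omega⟩
    · obtain ⟨a, b, c, d, hab, hbc, hcd, h1, h2, h3⟩ := of_contains3412 w h3412
      have hab' : (a:ℕ) < (b:ℕ) := hab
      have hbc' : (b:ℕ) < (c:ℕ) := hbc
      have hcd' : (c:ℕ) < (d:ℕ) := hcd
      have h1' : ((w a : Fin n):ℕ) < ((w b : Fin n):ℕ) := h1
      have h2' : ((w c : Fin n):ℕ) < ((w d : Fin n):ℕ) := h2
      have h3' : ((w d : Fin n):ℕ) < ((w a : Fin n):ℕ) := h3
      rcases lt_or_ge ((b:ℕ)) ((w a : Fin n):ℕ) with hcase | hcase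
      · refine hAfter ((b:ℕ) + 1) (by omega) b.2 ?_
        refine Finset.one_lt_card.mpr ⟨a, ?_, b, ?_, hab.ne⟩ <;>
          exact Finset.mem_filter.mpr ⟨Finset.mem_univ _, by omega⟩
      · refine hAfterD (((w a : Fin n):ℕ) + 1) (by omega) (w a).2 ?_
        refine Finset.one_lt_card.mpr ⟨c, ?_, d, ?_, hcd.ne⟩ <;>
          exact Finset.mem_filter.mpr ⟨Finset.mem_univ _, by omega⟩
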